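/- For f(x,y) = (y − x², x − y²), the image N_f(ℝ²) of the Newton map is disjoint from the open set C = {(x,y) : y > x² or x > y²}; equivalently, every point (x₀,y₀) in the image satisfies x₀² ≥ y₀ and y₀² ≥ x₀. -/

import Mathlib

/-- The explicit derivative of `f(x,y) = (y − x², x − y²)` as a continuous linear
equivalence (invertible since `4xy − 1 ≠ 0`). -/
noncomputable def myEquiv (x y : ℝ) (hD : (4:ℝ) * x * y - 1 ≠ 0) : (ℝ × ℝ) ≃L[ℝ] (ℝ × ℝ) :=
  LinearEquiv.toContinuousLinearEquiv
  { toFun := fun z => (-(2*x)*z.1 + z.2, z.1 - (2*y)*z.2)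
    invFun := fun z => ((-(2*y)*z.1 - z.2)/(4*x*y-1), (-z.1 - (2*x)*z.2)/(4*x*y-1))
    map_add' := by intro a b; simp [Prod.ext_iff]; constructor <;> ring
    map_smul' := by intro c a; simp [Prod.ext_iff, smul_eq_mul]; constructor <;> ring
    left_inv := by intro a; simp [Prod.ext_iff]; constructor <;> (rw [div_eq_iff hD]; ring)
    right_inv := by intro a; simp [Prod.ext_iff]; constructor <;> [(simp only [div_eq_mul_inv]; linear_combination a.1 * mul_inv_cancel₀ hD); (simp only [div_eq_mul_inv]; linear_combination a.2 * mul_inv_cancel₀ hD)] }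

/-- Newton map on the plane. -/
noncomputable def newton2 (f : ℝ × ℝ → ℝ × ℝ) (x : ℝ × ℝ) : ℝ × ℝ :=
  x - (fderiv ℝ f x).inverse (f x)

/-- The image of the Newton map of `f(x,y) = (y − x², x − y²)` is disjoint from the open
set `C = {y > x² or x > y²}`: every image point `(x₀,y₀)` satisfies `x₀² ≥ y₀` and
`y₀² ≥ x₀`. -/
theorem stmt_16 (f : ℝ × ℝ → ℝ × ℝ)
    (hf : ∀ z : ℝ × ℝ, f z = (z.2 - z.1 ^ 2, z.1 - z.2 ^ 2))
    (x y : ℝ) (h : 4 * x * y ≠ 1) :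
    (newton2 f (x, y)).1 ^ 2 ≥ (newton2 f (x, y)).2 ∧
    (newton2 f (x, y)).2 ^ 2 ≥ (newton2 f (x, y)).1 := by
  have hD : (4:ℝ) * x * y - 1 ≠ 0 := sub_ne_zero.mpr h
  have hf' : f = fun z : ℝ × ℝ => (z.2 - z.1 ^ 2, z.1 - z.2 ^ 2) := funext hf
  have hder : HasFDerivAt f (myEquiv x y hD).toContinuousLinearMap (x, y) := by
    rw [hf']
    have hsq1 : HasFDerivAt (fun z : ℝ × ℝ => z.1 ^ 2)
        ((2*x) • ContinuousLinearMap.fst ℝ ℝ ℝ) (x, y) := by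
      have := (hasFDerivAt_fst (𝕜 := ℝ) (p := ((x,y):ℝ×ℝ))).mul
        (hasFDerivAt_fst (𝕜 := ℝ) (p := ((x,y):ℝ×ℝ)))
      simp only [← sq] at this
      exact this.congr_fderiv (by ext z <;> simp <;> ring)
    have hsq2 : HasFDerivAt (fun z : ℝ × ℝ => z.2 ^ 2)
        ((2*y) • ContinuousLinearMap.snd ℝ ℝ ℝ) (x, y) := by
      have := (hasFDerivAt_snd (𝕜 := ℝ) (p := ((x,y):ℝ×ℝ))).mul
        (hasFDerivAt_snd (𝕜 := ℝ) (p := ((x,y):ℝ×ℝ)))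
      simp only [← sq] at this
      exact this.congr_fderiv (by ext z <;> simp <;> ring)
    have hh := HasFDerivAt.prodMk (hasFDerivAt_snd.sub hsq1) (hasFDerivAt_fst.sub hsq2)
    exact hh.congr_fderiv (by ext z <;> simp [myEquiv])
  have hfd : fderiv ℝ f (x, y) = (myEquiv x y hD).toContinuousLinearMap := hder.fderiv
  have hinv : (fderiv ℝ f (x, y)).inverse = ((myEquiv x y hD).symm : ℝ × ℝ →L[ℝ] ℝ × ℝ) := by
    rw [hfd]; exact ContinuousLinearMap.inverse_equiv _
  have hN : newton2 f (x, y) =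
      (y * (2*x^2 + y) / (4*x*y - 1), x * (2*y^2 + x) / (4*x*y - 1)) := by
    rw [newton2, hinv, hf]
    simp [myEquiv, Prod.ext_iff]
    constructor <;> (rw [eq_div_iff hD, sub_mul, div_mul_cancel₀ _ hD]; ring)
  rw [hN]
  constructor
  · have key : (y * (2*x^2 + y) / (4*x*y - 1)) ^ 2 - x * (2*y^2 + x) / (4*x*y - 1)
        = ((2*x^2*y - y^2 - x)/(4*x*y - 1))^2 := by
      field_simp; ring
    have := sq_nonneg ((2*x^2*y - y^2 - x)/(4*x*y - 1))
    simp only []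
    linarith
  · have key : (x * (2*y^2 + x) / (4*x*y - 1)) ^ 2 - y * (2*x^2 + y) / (4*x*y - 1)
        = ((2*y^2*x - x^2 - y)/(4*x*y - 1))^2 := by
      field_simp; ring
    have := sq_nonneg ((2*y^2*x - x^2 - y)/(4*x*y - 1))
    simp only []
    linarith
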